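/- Consider a finite network with n nodes and k edges, where edge e has distinct endpoints m_e, n_e, signed incidence vector b_e = χ_{m_e} − χ_{n_e} ∈ ℝⁿ, and conductance w_e ≥ 0, and let L = Σ_e w_e·b_e·b_eᵀ be its weighted graph Laplacian. Fix an edge e₀ and let L' = L − w_{e₀}·b_{e₀}·b_{e₀}ᵀ be the Laplacian of the network with edge e₀ removed. If I, V, V' ∈ ℝⁿ satisfy L·V = I and L'·V' = I, then ⟨V', I⟩ ≥ ⟨V, I⟩. (The total I²R losses of a current-controlled circuit comprised purely of current sources and resistors cannot decrease after removing a resistance link.) -/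
import Mathlib


open Matrix

lemma dp_sum {n k : ℕ} (x : Fin n → ℝ) (f : Fin k → Fin n → ℝ) :
    x ⬝ᵥ (∑ e, f e) = ∑ e, x ⬝ᵥ f e := by
  simp only [dotProduct, Finset.sum_apply, Finset.mul_sum]
  exact Finset.sum_comm

lemma sum_mv {n k : ℕ} (M : Fin k → Matrix (Fin n) (Fin n) ℝ) (y : Fin n → ℝ) :
    (∑ e, M e) *ᵥ y = ∑ e, (M e) *ᵥ y := by
  ext i
  simp only [Matrix.mulVec, dotProduct, Finset.sum_apply, Matrix.sum_apply, Finset.sum_mul]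
  exact Finset.sum_comm

lemma quad_vecMulVec {n : ℕ} (c : ℝ) (a x y : Fin n → ℝ) :
    x ⬝ᵥ (c • vecMulVec a a).mulVec y = c * ((a ⬝ᵥ x) * (a ⬝ᵥ y)) := by
  simp only [Matrix.smul_mulVec, dotProduct_smul, smul_eq_mul]
  congr 1
  simp only [Matrix.mulVec, dotProduct, vecMulVec_apply, Finset.mul_sum, Finset.sum_mul]
  rw [Finset.sum_comm]
  apply Finset.sum_congr rfl; intros; apply Finset.sum_congr rfl; intros; ring

/-- The total I²R losses of a current-controlled circuit (comprised purely of current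
sources and resistors) cannot decrease after removing a resistance link. -/
theorem dissipation_increase_of_edge_removal
    {n k : ℕ} (mE nE : Fin k → Fin n) (hne : ∀ e, mE e ≠ nE e)
    (w : Fin k → ℝ) (hw : ∀ e, 0 ≤ w e)
    (b : Fin k → Fin n → ℝ)
    (hb : ∀ e, b e = fun j => Pi.single (mE e) (1 : ℝ) j - Pi.single (nE e) (1 : ℝ) j)
    (L L' : Matrix (Fin n) (Fin n) ℝ)
    (hLdef : L = ∑ e : Fin k, w e • vecMulVec (b e) (b e))
    (e₀ : Fin k)
    (hL'def : L' = L - w e₀ • vecMulVec (b e₀) (b e₀))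
    (I V V' : Fin n → ℝ)
    (hV : L.mulVec V = I) (hV' : L'.mulVec V' = I) :
    V' ⬝ᵥ I ≥ V ⬝ᵥ I := by
  have qL : ∀ x y : Fin n → ℝ,
      x ⬝ᵥ L.mulVec y = ∑ e : Fin k, w e * ((b e ⬝ᵥ x) * (b e ⬝ᵥ y)) := by
    intro x y
    rw [hLdef, sum_mv, dp_sum]
    exact Finset.sum_congr rfl fun e _ => quad_vecMulVec (w e) (b e) x y
  have qL' : ∀ x y : Fin n → ℝ,
      x ⬝ᵥ L'.mulVec y =
        (∑ e : Fin k, w e * ((b e ⬝ᵥ x) * (b e ⬝ᵥ y)))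
          - w e₀ * ((b e₀ ⬝ᵥ x) * (b e₀ ⬝ᵥ y)) := by
    intro x y
    rw [hL'def, Matrix.sub_mulVec, dotProduct_sub, qL, quad_vecMulVec]
  -- symmetry of the quadratic forms
  have symL' : ∀ x y : Fin n → ℝ, x ⬝ᵥ L'.mulVec y = y ⬝ᵥ L'.mulVec x := by
    intro x y
    rw [qL', qL']
    congr 1
    · exact Finset.sum_congr rfl fun e _ => by ring
    · ring
  set d : Fin n → ℝ := V - V' with hd
  have hpos : 0 ≤ d ⬝ᵥ L'.mulVec d := by
    rw [qL', ← Finset.add_sum_erase Finset.univ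
      (fun e => w e * ((b e ⬝ᵥ d) * (b e ⬝ᵥ d))) (Finset.mem_univ e₀)]
    have h : (0:ℝ) ≤ ∑ e ∈ Finset.univ.erase e₀, w e * ((b e ⬝ᵥ d) * (b e ⬝ᵥ d)) :=
      Finset.sum_nonneg fun e _ => mul_nonneg (hw e) (mul_self_nonneg _)
    linarith
  have hexp : d ⬝ᵥ L'.mulVec d
      = V ⬝ᵥ L'.mulVec V - 2 * (V ⬝ᵥ I) + V' ⬝ᵥ I := by
    have h1 : V ⬝ᵥ L'.mulVec V' = V ⬝ᵥ I := by rw [hV']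
    have h2 : V' ⬝ᵥ L'.mulVec V = V ⬝ᵥ I := by rw [symL', hV']
    have h3 : V' ⬝ᵥ L'.mulVec V' = V' ⬝ᵥ I := by rw [hV']
    rw [hd, Matrix.mulVec_sub, dotProduct_sub, sub_dotProduct, sub_dotProduct,
      h1, h2, h3]
    ring
  have hLVV : V ⬝ᵥ L'.mulVec V ≤ V ⬝ᵥ I := by
    rw [qL', ← hV, qL]
    have : (0:ℝ) ≤ w e₀ * ((b e₀ ⬝ᵥ V) * (b e₀ ⬝ᵥ V)) :=
      mul_nonneg (hw e₀) (mul_self_nonneg _)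
    linarith
  linarith [hpos, hexp, hLVV]
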